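/- Let G be a class of functions, g⁰ ∈ G, and for a functional R : G → ℝ (empirical risk) and a 'risk' Q : G → [0,∞) with Q(g⁰)=0, suppose ĝ minimizes R over G. Define ŝ = √(Q(ĝ)) and, for s ≥ 0, Ê(s) = sup{R(g⁰) - R(g) + Q(g) : g ∈ G, Q(g) ≤ s²} (with the identification R(g) - R(g⁰) = Q(g) - [(P_n-P)(f⁰ - f_g)]). Then ŝ minimizes s ↦ s² - Ê(s) over s ≥ 0. Concretely: if for all g ∈ G, P_n(f_g) - P_n(f⁰) = P(f_g - f⁰) - (P_n - P)(f⁰ - f_g), and ĝ minimizes P_n(f_g), then ŝ := √(P(f_{ĝ} - f⁰)) satisfies ŝ ∈ argmin_{s≥0} { s² - max_{f ∈ F_s} (P_n - P)(f⁰ - f) }, where F_s = {f ∈ F : P(f - f⁰) ≤ s²}. -/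
import Mathlib

/-- Representation formula for the excess risk: if `Exc g = P(f_g - f⁰) ≥ 0` on
`G`, `N g = (P_n - P)(f⁰ - f_g)`, so that the empirical risk of `g` equals
`Exc g - N g` up to an additive constant, and `ĝ ∈ G` minimizes the empirical
risk, then `ŝ = √(Exc ĝ)` minimizes `s ↦ s² - sup{N g : g ∈ G, Exc g ≤ s²}`
over `s ≥ 0`. -/
theorem stmt6 {ι : Type*} (G : Set ι) (Exc N : ι → ℝ)
    (hExc : ∀ g ∈ G, 0 ≤ Exc g)
    (g0 : ι) (hg0 : g0 ∈ G) (hExc0 : Exc g0 = 0) (hN0 : N g0 = 0)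
    (ghat : ι) (hghat : ghat ∈ G)
    (hmin : ∀ g ∈ G, Exc ghat - N ghat ≤ Exc g - N g)
    (hbdd : ∀ s : ℝ, BddAbove (N '' {g ∈ G | Exc g ≤ s ^ 2})) :
    ∀ s : ℝ, 0 ≤ s →
      (Real.sqrt (Exc ghat)) ^ 2
          - sSup (N '' {g ∈ G | Exc g ≤ (Real.sqrt (Exc ghat)) ^ 2})
        ≤ s ^ 2 - sSup (N '' {g ∈ G | Exc g ≤ s ^ 2}) := by
  intro s hs
  have hE : (Real.sqrt (Exc ghat)) ^ 2 = Exc ghat := Real.sq_sqrt (hExc _ hghat)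
  rw [hE]
  have h1 : N ghat ≤ sSup (N '' {g ∈ G | Exc g ≤ Exc ghat}) := by
    apply le_csSup
    · have := hbdd (Real.sqrt (Exc ghat)); rwa [hE] at this
    · exact ⟨ghat, ⟨hghat, le_refl _⟩, rfl⟩
  have h2 : sSup (N '' {g ∈ G | Exc g ≤ s ^ 2}) ≤ s ^ 2 - (Exc ghat - N ghat) := by
    apply csSup_le
    · exact ⟨N g0, g0, ⟨hg0, by rw [hExc0]; positivity⟩, rfl⟩
    · rintro _ ⟨g, ⟨hgG, hgs⟩, rfl⟩
      have := hmin g hgG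
      linarith
  linarith
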